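/- For every unit vector (a, b) ∈ ℂ² (i.e., |a|² + |b|² = 1) there exist real numbers γ, φ, θ with 0 ≤ θ ≤ π, 0 ≤ φ < 2π, (θ = 0 → φ = 0), and (θ = π → φ = 0), such that a = e^{iγ}·cos(θ/2) and b = e^{iγ}·e^{iφ}·sin(θ/2); that is, up to a global phase, every qubit state is captured by the symQV qubit encoding with its period constraints. -/

import Mathlib

lemma exp_phase_eq (x : ℝ) :
    Complex.exp ((toIcoMod Real.two_pi_pos 0 x : ℝ) * Complex.I) = Complex.exp (x * Complex.I) := by
  have h := self_sub_toIcoMod Real.two_pi_pos 0 x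
  set n := toIcoDiv Real.two_pi_pos 0 x
  set φ := toIcoMod Real.two_pi_pos 0 x with hφ
  have hx : (x : ℂ) = (φ : ℂ) + (n : ℂ) * (2 * Real.pi) := by
    have : x - φ = (n : ℝ) * (2 * Real.pi) := by
      rw [h]; push_cast [zsmul_eq_mul]; ring
    have hr : x = φ + (n:ℝ) * (2 * Real.pi) := by linarith
    exact_mod_cast congrArg (Complex.ofReal) hr
  calc Complex.exp ((φ:ℝ) * Complex.I)
      = Complex.exp ((φ:ℝ) * Complex.I) * Complex.exp ((n:ℂ) * (2 * Real.pi * Complex.I)) := by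
        rw [Complex.exp_int_mul_two_pi_mul_I, mul_one]
    _ = Complex.exp ((φ:ℝ) * Complex.I + (n:ℂ) * (2 * Real.pi * Complex.I)) :=
        (Complex.exp_add _ _).symm
    _ = Complex.exp (x * Complex.I) := by
        congr 1; linear_combination (-Complex.I) * hx

/-- Up to a global phase `e^{iγ}`, every qubit state (unit vector in ℂ²) is captured
by the symQV qubit encoding with its period constraints. -/
theorem symQV_qubit_encoding_surjective (a b : ℂ)
    (h : ‖a‖ ^ 2 + ‖b‖ ^ 2 = 1) :
    ∃ γ φ θ : ℝ,
      0 ≤ θ ∧ θ ≤ Real.pi ∧ 0 ≤ φ ∧ φ < 2 * Real.pi ∧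
      (θ = 0 → φ = 0) ∧ (θ = Real.pi → φ = 0) ∧
      a = Complex.exp (γ * Complex.I) * Real.cos (θ / 2) ∧
      b = Complex.exp (γ * Complex.I) * Complex.exp (φ * Complex.I) * Real.sin (θ / 2) := by
  by_cases hb : b = 0
  · -- θ = 0
    have ha1 : ‖a‖ = 1 := by
      have h2 : ‖a‖ ^ 2 = 1 := by simpa [hb] using h
      nlinarith [norm_nonneg a]
    refine ⟨Complex.arg a, 0, 0, le_refl _, Real.pi_pos.le, le_refl _,
      by positivity, fun _ => rfl, fun _ => rfl, ?_, ?_⟩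
    · rw [show (0:ℝ)/2 = 0 by ring, Real.cos_zero]
      have := Complex.norm_mul_exp_arg_mul_I a
      rw [ha1] at this; simp at this ⊢; exact this.symm
    · simp [hb]
  · by_cases ha : a = 0
    · -- θ = π
      have hb1 : ‖b‖ = 1 := by
        have h2 : ‖b‖ ^ 2 = 1 := by simpa [ha] using h
        nlinarith [norm_nonneg b]
      refine ⟨Complex.arg b, 0, Real.pi, Real.pi_pos.le, le_refl _, le_refl _,
        by positivity, fun h0 => absurd h0.symm (ne_of_lt Real.pi_pos), fun _ => rfl, ?_, ?_⟩
      · simp [ha, Real.cos_pi_div_two]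
      · rw [Real.sin_pi_div_two]
        have := Complex.norm_mul_exp_arg_mul_I b
        rw [hb1] at this; simp at this ⊢; exact this.symm
    · -- generic case
      have ha0 : (0:ℝ) < ‖a‖ := norm_pos_iff.mpr ha
      have hb0 : (0:ℝ) < ‖b‖ := norm_pos_iff.mpr hb
      have ha1 : ‖a‖ < 1 := by nlinarith
      set θ := 2 * Real.arccos (‖a‖) with hθ
      set φ := toIcoMod Real.two_pi_pos 0 (Complex.arg b - Complex.arg a) with hφ
      have hmem := toIcoMod_mem_Ico' Real.two_pi_pos (Complex.arg b - Complex.arg a)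
      have harccos_pos : 0 < Real.arccos (‖a‖) := Real.arccos_pos.2 ha1
      have harccos_lt : Real.arccos (‖a‖) < Real.pi / 2 := Real.arccos_lt_pi_div_two.2 ha0
      refine ⟨Complex.arg a, φ, θ, by positivity, by linarith, hmem.1, hmem.2,
        fun h0 => ((by positivity : (0:ℝ) < θ).ne' h0).elim,
        fun h0 => ((by linarith : θ < Real.pi).ne h0).elim, ?_, ?_⟩
      · have : θ / 2 = Real.arccos (‖a‖) := by rw [hθ]; ring
        rw [this, Real.cos_arccos (by linarith) ha1.le]
        rw [mul_comm]
        exact_mod_cast (Complex.norm_mul_exp_arg_mul_I a).symm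
      · have hsin : Real.sin (θ / 2) = ‖b‖ := by
          have : θ / 2 = Real.arccos (‖a‖) := by rw [hθ]; ring
          rw [this, Real.sin_arccos]
          rw [show 1 - ‖a‖ ^ 2 = ‖b‖ ^ 2 by linarith]
          exact Real.sqrt_sq hb0.le
        rw [hsin, exp_phase_eq, ← Complex.exp_add]
        have : (Complex.arg a : ℂ) * Complex.I + (Complex.arg b - Complex.arg a : ℝ) * Complex.I
            = (Complex.arg b : ℝ) * Complex.I := by push_cast; ring
        rw [this, mul_comm]
        exact_mod_cast (Complex.norm_mul_exp_arg_mul_I b).symm
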